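/- arXiv:2007.03797 — 3 statements merged into one kernel-verified Lean document; each statement's English description precedes it below -/
import Mathlib

section
/- Let 𝒢 = ℱ + λ𝒜 where ℱ and 𝒜 are convex functions on ℝ^{d×m}, and suppose subgradients of ℱ at all iterates are bounded in norm by B and ‖∇𝒜(W^k)‖ ≤ B/λ for all k. With constant step sizes α_1 = ⋯ = α_K = λ/√K, the FedAMP iterates W^k (given by U^k = W^{k-1} - α_k ∇𝒜(W^{k-1}) and W^k = argmin_W ℱ(W) + (λ/(2α_k))‖W - U^k‖²) satisfy min_{0≤k≤K} 𝒢(W^k) ≤ 𝒢(W*) + (‖W^0 - W*‖² + 5B²)/√K, where W* is a minimizer of 𝒢. -/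
open Set


lemma aux_grad {E : Type*} [NormedAddCommGroup E] [InnerProductSpace ℝ E] [CompleteSpace E]
    (f : E → ℝ) (hf : ConvexOn ℝ Set.univ f) (hd : Differentiable ℝ f) (x y : E) :
    f x + (inner ℝ (gradient f x) (y - x) : ℝ) ≤ f y := by
  set v := y - x with hv
  set d : ℝ := (inner ℝ (gradient f x) v : ℝ) with hdd
  have hline : HasDerivAt (fun t : ℝ => x + t • v) v 0 := by
    simpa using ((hasDerivAt_id (0:ℝ)).smul_const v).const_add x
  have hcomp : HasDerivAt (fun t : ℝ => f (x + t • v)) d 0 := by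
    have hg := (hd x).hasGradientAt.hasFDerivAt
    have hg' : HasFDerivAt f ((InnerProductSpace.toDual ℝ E) (gradient f x)) (x + (0:ℝ) • v) := by
      simpa using hg
    have := hg'.comp_hasDerivAt (0:ℝ) hline
    convert this using 1
    all_goals rfl
  have hslope : Filter.Tendsto (slope (fun t : ℝ => f (x + t • v)) 0)
      (nhdsWithin 0 (Set.Ioi (0:ℝ))) (nhds d) := by
    have := hasDerivAt_iff_tendsto_slope.mp hcomp
    exact this.mono_left (nhdsWithin_mono _ (fun t ht => ne_of_gt ht))
  have hev : ∀ᶠ t in nhdsWithin (0:ℝ) (Set.Ioi 0),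
      slope (fun t : ℝ => f (x + t • v)) 0 t ≤ f y - f x := by
    filter_upwards [Ioc_mem_nhdsGT_of_mem (Set.left_mem_Ico.2 one_pos)] with t ht
    have h01 : (0:ℝ) ≤ 1 - t := by linarith [ht.2]
    have hconv := hf.2 (Set.mem_univ x) (Set.mem_univ y) h01 (le_of_lt ht.1) (by ring)
    have hxy : (1 - t) • x + t • y = x + t • v := by
      simp [hv, smul_sub, sub_smul]; module
    rw [hxy] at hconv
    rw [slope_def_field]
    simp only [zero_smul, add_zero, sub_zero]
    rw [div_le_iff₀ ht.1]
    have h2 : f (x + t • v) ≤ (1 - t) * f x + t * f y := hconv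
    nlinarith [h2]
  have := le_of_tendsto hslope hev
  linarith [this]

lemma aux_prox {E : Type*} [NormedAddCommGroup E] [InnerProductSpace ℝ E]
    (F : E → ℝ) (hF : ConvexOn ℝ Set.univ F) (c : ℝ) (hc : 0 < c) (U Q : E)
    (hmin : ∀ Z, F Q + c * ‖Q - U‖ ^ 2 ≤ F Z + c * ‖Z - U‖ ^ 2) (Z : E) :
    F Q + (inner ℝ ((2 * c) • (U - Q)) (Z - Q) : ℝ) ≤ F Z := by
  set w := Z - Q with hw
  set v := Q - U with hv
  have hkey : ∀ t : ℝ, t ∈ Set.Ioc (0:ℝ) 1 →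
      F Q - F Z - 2 * c * (inner ℝ v w : ℝ) ≤ c * ‖w‖ ^ 2 * t := by
    intro t ht
    have hZt : (1 - t) • Q + t • Z = Q + t • w := by
      simp [hw, smul_sub, sub_smul]; module
    have hconv : F (Q + t • w) ≤ (1 - t) * F Q + t * F Z := by
      have := hF.2 (Set.mem_univ Q) (Set.mem_univ Z)
        (show (0:ℝ) ≤ 1 - t by linarith [ht.2]) (le_of_lt ht.1)
        (show (1 - t) + t = 1 by ring)
      rw [hZt] at this
      simpa using this
    have hmin' := hmin (Q + t • w)
    have hnorm : ‖Q + t • w - U‖ ^ 2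
        = ‖v‖ ^ 2 + 2 * (t * (inner ℝ v w : ℝ)) + t ^ 2 * ‖w‖ ^ 2 := by
      have h1 : Q + t • w - U = v + t • w := by simp [hv]; module
      rw [h1, norm_add_sq_real, real_inner_smul_right, norm_smul]
      rw [mul_pow]
      simp [abs_of_pos ht.1]
      try ring
    rw [hnorm] at hmin'
    have ht1 := ht.1
    nlinarith [hmin', hconv, ht.1]
  have htend : Filter.Tendsto (fun t : ℝ => c * ‖w‖ ^ 2 * t)
      (nhdsWithin 0 (Set.Ioi (0:ℝ))) (nhds 0) := by
    have : Filter.Tendsto (fun t : ℝ => c * ‖w‖ ^ 2 * t) (nhds 0) (nhds (c * ‖w‖ ^ 2 * 0)) :=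
      (continuous_const.mul continuous_id).tendsto 0
    simpa using this.mono_left nhdsWithin_le_nhds
  have hev : ∀ᶠ t in nhdsWithin (0:ℝ) (Set.Ioi 0),
      F Q - F Z - 2 * c * (inner ℝ v w : ℝ) ≤ c * ‖w‖ ^ 2 * t := by
    filter_upwards [Ioc_mem_nhdsGT_of_mem (Set.left_mem_Ico.2 one_pos)] with t ht
    exact hkey t ht
  have hL : F Q - F Z - 2 * c * (inner ℝ v w : ℝ) ≤ 0 := ge_of_tendsto htend hev
  have hinner : (inner ℝ ((2 * c) • (U - Q)) w : ℝ) = -(2 * c * (inner ℝ v w : ℝ)) := by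
    rw [real_inner_smul_left]
    have : (U - Q) = -v := by simp [hv]
    rw [this, inner_neg_left]
    ring
  rw [hinner]
  linarith

/-- Convex convergence of FedAMP: with `𝒢 = ℱ + λ𝒜` convex, subgradients of `ℱ` at the
iterates bounded by `B`, `‖∇𝒜(W^k)‖ ≤ B/λ`, and constant step sizes `α_k = λ/√K`, the
FedAMP iterates satisfy
`min_{0≤k≤K} 𝒢(W^k) ≤ 𝒢(W*) + (‖W⁰ - W*‖² + 5B²)/√K`. -/
theorem stmt_9 (n : ℕ) (F 𝒜 : EuclideanSpace ℝ (Fin n) → ℝ)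
    (hF : ConvexOn ℝ Set.univ F) (h𝒜 : ConvexOn ℝ Set.univ 𝒜)
    (h𝒜d : Differentiable ℝ 𝒜)
    (lam B : ℝ) (hlam : 0 < lam) (hB : 0 < B)
    (K : ℕ) (hK : 1 ≤ K)
    (W : ℕ → EuclideanSpace ℝ (Fin n))
    (Wstar : EuclideanSpace ℝ (Fin n))
    (hWstar : ∀ Z, F Wstar + lam * 𝒜 Wstar ≤ F Z + lam * 𝒜 Z)
    (hsub : ∀ k ≤ K, ∀ Y : EuclideanSpace ℝ (Fin n),
      (∀ Z, F (W k) + (inner ℝ Y (Z - W k) : ℝ) ≤ F Z) → ‖Y‖ ≤ B)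
    (hgrad : ∀ k ≤ K, ‖gradient 𝒜 (W k)‖ ≤ B / lam)
    (hiter : ∀ k, 1 ≤ k → k ≤ K → ∀ Z,
      F (W k) + (lam / (2 * (lam / Real.sqrt K))) *
          ‖W k - (W (k - 1) - (lam / Real.sqrt K) • gradient 𝒜 (W (k - 1)))‖ ^ 2
        ≤ F Z + (lam / (2 * (lam / Real.sqrt K))) *
          ‖Z - (W (k - 1) - (lam / Real.sqrt K) • gradient 𝒜 (W (k - 1)))‖ ^ 2) :
    ∃ k ≤ K, F (W k) + lam * 𝒜 (W k)
      ≤ (F Wstar + lam * 𝒜 Wstar) + (‖W 0 - Wstar‖ ^ 2 + 5 * B ^ 2) / Real.sqrt K := by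
  set s : ℝ := Real.sqrt K with hsdef
  have hKpos : (0:ℝ) < K := by exact_mod_cast hK
  have hs0 : 0 < s := Real.sqrt_pos.2 hKpos
  have hK2 : (K:ℝ) = s ^ 2 := (Real.sq_sqrt hKpos.le).symm
  set α : ℝ := lam / s with hαdef
  have hα : 0 < α := div_pos hlam hs0
  have hsα : s * α = lam := by rw [hαdef]; field_simp
  have hcoef : lam / (2 * (lam / s)) = s / 2 := by
    field_simp
  set Gs : ℝ := F Wstar + lam * 𝒜 Wstar with hGs
  set Gk : ℕ → ℝ := fun k => F (W k) + lam * 𝒜 (W k) with hGk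
  set D : ℕ → ℝ := fun k => ‖W k - Wstar‖ ^ 2 with hD
  -- per-step inequality
  have step : ∀ i, i < K → Gk (i+1) ≤ Gs + (s/2) * (D i - D (i+1)) + 5 * B^2 / s := by
    intro i hi
    set P := W i with hP
    set Q := W (i+1) with hQ
    set g := gradient 𝒜 P with hg
    set gQ := gradient 𝒜 Q with hgQ'
    set U : EuclideanSpace ℝ (Fin n) := P - α • g with hU
    have hmin : ∀ Z, F Q + (s/2) * ‖Q - U‖ ^ 2 ≤ F Z + (s/2) * ‖Z - U‖ ^ 2 := by
      intro Z
      have h := hiter (i+1) (by omega) (by omega) Z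
      simpa [hcoef, hU, hαdef, hP, hQ, hg] using h
    set Y : EuclideanSpace ℝ (Fin n) := s • (U - Q) with hY
    have hYsub : ∀ Z, F Q + (inner ℝ Y (Z - Q) : ℝ) ≤ F Z := by
      intro Z
      have h := aux_prox F hF (s/2) (by positivity) U Q hmin Z
      have h2s : (2 * (s/2)) • (U - Q) = Y := by rw [hY]; congr 1; ring
      rwa [h2s] at h
    have hYB : ‖Y‖ ≤ B := hsub (i+1) (by omega) Y hYsub
    have hgP : ‖g‖ ≤ B / lam := hgrad i (by omega)
    have hgQ : ‖gQ‖ ≤ B / lam := hgrad (i+1) (by omega)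
    have ineq1 : F Q + (inner ℝ Y (Wstar - Q) : ℝ) ≤ F Wstar := hYsub Wstar
    have ineq2 : 𝒜 P + (inner ℝ g (Wstar - P) : ℝ) ≤ 𝒜 Wstar := aux_grad 𝒜 h𝒜 h𝒜d P Wstar
    have ineq3 : 𝒜 Q + (inner ℝ gQ (P - Q) : ℝ) ≤ 𝒜 P := aux_grad 𝒜 h𝒜 h𝒜d Q P
    -- vector identities
    have idA : Y + lam • g = s • (P - Q) := by
      rw [hY, hU, ← hsα]; module
    have hQU : s⁻¹ • Y = U - Q := by
      rw [hY, smul_smul, inv_mul_cancel₀ hs0.ne', one_smul]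
    have idB : Q - P = -(α • g) - s⁻¹ • Y := by
      rw [hQU, hU]
      try module
    -- scalar consequences
    have n2 : D (i+1) = D i - 2 * (inner ℝ (P - Q) (P - Wstar) : ℝ) + ‖P - Q‖ ^ 2 := by
      have h1 : Q - Wstar = (P - Wstar) - (P - Q) := by module
      show ‖Q - Wstar‖ ^ 2 = ‖P - Wstar‖ ^ 2 - 2 * _ + _
      rw [h1, norm_sub_sq_real, real_inner_comm]
      try ring
    have n1 : (inner ℝ (Y + lam • g) (P - Wstar) : ℝ) = s * (inner ℝ (P - Q) (P - Wstar) : ℝ) := by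
      rw [idA, real_inner_smul_left]
    have n3 : (inner ℝ Y (Q - P) : ℝ) = -(α * (inner ℝ Y g : ℝ)) - s⁻¹ * ‖Y‖ ^ 2 := by
      rw [idB, inner_sub_right, inner_neg_right, real_inner_smul_right, real_inner_smul_right,
        real_inner_self_eq_norm_sq]
    have n4 : ‖Q - P‖ ≤ 2 * B / s := by
      rw [idB]
      have h1 : -(α • g) - s⁻¹ • Y = -((α • g) + s⁻¹ • Y) := by module
      rw [h1, norm_neg]
      have h2 : ‖α • g + s⁻¹ • Y‖ ≤ α * ‖g‖ + s⁻¹ * ‖Y‖ := by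
        refine le_trans (norm_add_le _ _) ?_
        rw [norm_smul, norm_smul, Real.norm_eq_abs, Real.norm_eq_abs,
          abs_of_pos hα, abs_of_pos (by positivity : (0:ℝ) < s⁻¹)]
      have h3 : α * ‖g‖ ≤ B / s := by
        calc α * ‖g‖ ≤ α * (B / lam) := mul_le_mul_of_nonneg_left hgP hα.le
          _ = B / s := by rw [hαdef]; field_simp
      have h4 : s⁻¹ * ‖Y‖ ≤ B / s := by
        calc s⁻¹ * ‖Y‖ ≤ s⁻¹ * B := mul_le_mul_of_nonneg_left hYB (by positivity)
          _ = B / s := by rw [inv_mul_eq_div]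
      calc ‖α • g + s⁻¹ • Y‖ ≤ α * ‖g‖ + s⁻¹ * ‖Y‖ := h2
        _ ≤ B / s + B / s := add_le_add h3 h4
        _ = 2 * B / s := by ring
    -- bound pieces
    have t1 : (s/2) * ‖P - Q‖ ^ 2 ≤ 2 * (B ^ 2 / s) := by
      have h0 : ‖P - Q‖ = ‖Q - P‖ := norm_sub_rev _ _
      have h1 : ‖P - Q‖ ^ 2 ≤ (2 * B / s) ^ 2 := by
        rw [h0]; exact pow_le_pow_left₀ (norm_nonneg _) n4 2
      have h2 : (s/2) * (2 * B / s) ^ 2 = 2 * (B ^ 2 / s) := by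
        field_simp
      calc (s/2) * ‖P - Q‖ ^ 2 ≤ (s/2) * (2 * B / s) ^ 2 :=
            mul_le_mul_of_nonneg_left h1 (by positivity)
        _ = 2 * (B ^ 2 / s) := h2
    have t2 : (inner ℝ Y (Q - P) : ℝ) ≤ B ^ 2 / s := by
      rw [n3]
      have h1 : |(inner ℝ Y g : ℝ)| ≤ ‖Y‖ * ‖g‖ := abs_real_inner_le_norm Y g
      have h2 : ‖Y‖ * ‖g‖ ≤ B * (B / lam) :=
        mul_le_mul hYB hgP (norm_nonneg _) hB.le
      have h3 : α * (B * (B / lam)) = B ^ 2 / s := by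
        rw [hαdef]; field_simp
      have h0 : -(inner ℝ Y g : ℝ) ≤ B * (B / lam) := by
        have := neg_abs_le (inner ℝ Y g : ℝ); linarith
      have h4 : α * (-(inner ℝ Y g : ℝ)) ≤ α * (B * (B / lam)) :=
        mul_le_mul_of_nonneg_left h0 hα.le
      have heq : α * (-(inner ℝ Y g : ℝ)) = -(α * (inner ℝ Y g : ℝ)) := by ring
      have h5 : 0 ≤ s⁻¹ * ‖Y‖ ^ 2 := by positivity
      linarith [heq ▸ h4, h3.symm ▸ h4]
    have t3 : lam * (inner ℝ gQ (Q - P) : ℝ) ≤ 2 * (B ^ 2 / s) := by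
      have h1 : (inner ℝ gQ (Q - P) : ℝ) ≤ ‖gQ‖ * ‖Q - P‖ := real_inner_le_norm _ _
      have h2 : ‖gQ‖ * ‖Q - P‖ ≤ (B / lam) * (2 * B / s) :=
        mul_le_mul hgQ n4 (norm_nonneg _) (by positivity)
      have h3 : lam * ((B / lam) * (2 * B / s)) = 2 * (B ^ 2 / s) := by
        field_simp
      calc lam * (inner ℝ gQ (Q - P) : ℝ) ≤ lam * ((B / lam) * (2 * B / s)) :=
            mul_le_mul_of_nonneg_left (h1.trans h2) hlam.le
        _ = 2 * (B ^ 2 / s) := h3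
    have idC : (inner ℝ Y (Wstar - Q) : ℝ) + lam * (inner ℝ g (Wstar - P) : ℝ)
        + (inner ℝ (Y + lam • g) (P - Wstar) : ℝ) + (inner ℝ Y (Q - P) : ℝ) = 0 := by
      simp only [inner_add_left, inner_sub_right, real_inner_smul_left]
      ring
    have hIP : (inner ℝ (Y + lam • g) (P - Wstar) : ℝ)
        ≤ (s/2) * (D i - D (i+1)) + 2 * (B ^ 2 / s) := by
      have hIP' : s * (inner ℝ (P - Q) (P - Wstar) : ℝ)
          = (s/2) * (D i - D (i+1)) + (s/2) * ‖P - Q‖ ^ 2 := by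
        rw [n2]; ring
      rw [n1, hIP']
      linarith [t1]
    have ineq2' : lam * 𝒜 P + lam * (inner ℝ g (Wstar - P) : ℝ) ≤ lam * 𝒜 Wstar := by
      have h := mul_le_mul_of_nonneg_left ineq2 hlam.le
      rw [mul_add] at h
      exact h
    have ineq3' : lam * 𝒜 Q ≤ lam * 𝒜 P + lam * (inner ℝ gQ (Q - P) : ℝ) := by
      have hflip : (inner ℝ gQ (P - Q) : ℝ) = -(inner ℝ gQ (Q - P) : ℝ) := by
        rw [show P - Q = -(Q - P) by module, inner_neg_right]
      rw [hflip] at ineq3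
      have h0 : 𝒜 Q ≤ 𝒜 P + (inner ℝ gQ (Q - P) : ℝ) := by linarith
      have h := mul_le_mul_of_nonneg_left h0 hlam.le
      rw [mul_add] at h
      exact h
    show F Q + lam * 𝒜 Q ≤ Gs + (s/2) * (D i - D (i+1)) + 5 * B ^ 2 / s
    rw [hGs, show 5 * B ^ 2 / s = 5 * (B ^ 2 / s) from by ring]
    linarith [ineq1, ineq2', ineq3', idC, hIP, t2, t3]
  -- choose minimizer over Icc 1 K
  obtain ⟨m, hmem, hminm⟩ := Finset.exists_min_image (Finset.Icc 1 K) Gk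
    ⟨1, by simp [Finset.mem_Icc, hK]⟩
  rw [Finset.mem_Icc] at hmem
  refine ⟨m, hmem.2, ?_⟩
  have hsum : (K:ℝ) * Gk m ≤ (K:ℝ) * Gs + (s/2) * (D 0 - D K) + (K:ℝ) * (5 * B^2 / s) := by
    have h1 : ∀ i ∈ Finset.range K, Gk m ≤ Gs + (s/2) * (D i - D (i+1)) + 5 * B^2 / s := by
      intro i hi
      rw [Finset.mem_range] at hi
      exact le_trans (hminm (i+1) (Finset.mem_Icc.2 ⟨by omega, by omega⟩)) (step i hi)
    calc (K:ℝ) * Gk m = ∑ _i ∈ Finset.range K, Gk m := by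
          rw [Finset.sum_const, Finset.card_range, nsmul_eq_mul]
      _ ≤ ∑ i ∈ Finset.range K, (Gs + (s/2) * (D i - D (i+1)) + 5 * B^2 / s) :=
          Finset.sum_le_sum h1
      _ = (K:ℝ) * Gs + (s/2) * (D 0 - D K) + (K:ℝ) * (5 * B^2 / s) := by
          rw [Finset.sum_add_distrib, Finset.sum_add_distrib, ← Finset.mul_sum,
            Finset.sum_range_sub' D, Finset.sum_const, Finset.sum_const,
            Finset.card_range, nsmul_eq_mul, nsmul_eq_mul]
  rw [hK2] at hsum
  have hD0 : (0:ℝ) ≤ D 0 := by rw [hD]; positivity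
  have hDK : (0:ℝ) ≤ D K := by rw [hD]; positivity
  have h5 : s ^ 2 * (5 * B ^ 2 / s) = 5 * B ^ 2 * s := by
    field_simp
  rw [h5] at hsum
  clear_value s Gs Gk D
  have e2 : s * ((Gk m - Gs) * s) ≤ s * (D 0 + 5 * B ^ 2) := by
    linarith [hsum, mul_nonneg hs0.le hD0, mul_nonneg hs0.le hDK]
  have key : (Gk m - Gs) * s ≤ D 0 + 5 * B ^ 2 := le_of_mul_le_mul_left e2 hs0
  have hfin : Gk m ≤ Gs + (D 0 + 5 * B ^ 2) / s := by
    rw [← sub_le_iff_le_add', le_div_iff₀ hs0]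
    exact key
  simpa [hGk, hD, hGs] using hfin
end

section
/- Under the assumptions of the convex FedAMP convergence theorem, if instead the step sizes α_k > 0 satisfy Σ_{k=1}^∞ α_k = ∞ and Σ_{k=1}^∞ α_k² < ∞, then liminf_{k→∞} 𝒢(W^k) = 𝒢*, the optimal value of 𝒢. -/
open Set Filter
open Topology

lemma aux_grad_ineq {E : Type*} [NormedAddCommGroup E] [InnerProductSpace ℝ E] [CompleteSpace E]
    {f : E → ℝ} (hf : ConvexOn ℝ Set.univ f) (hd : Differentiable ℝ f) (x z : E) :
    f x + (inner ℝ (gradient f x) (z - x) : ℝ) ≤ f z := by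
  have h2 : HasDerivAt (fun t : ℝ => x + t • (z - x)) (z - x) 0 := by
    simpa using ((hasDerivAt_id (0:ℝ)).smul_const (z - x)).const_add x
  have h1 : HasFDerivAt f (fderiv ℝ f x) (x + (0:ℝ) • (z - x)) := by
    simpa using (hd x).hasFDerivAt
  have hD : HasDerivAt (fun t : ℝ => f (x + t • (z - x))) ((fderiv ℝ f x) (z - x)) 0 :=
    h1.comp_hasDerivAt 0 h2
  have hDval : (fderiv ℝ f x) (z - x) = (inner ℝ (gradient f x) (z - x) : ℝ) := by
    rw [gradient, InnerProductSpace.toDual_symm_apply]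
  rw [hDval] at hD
  rw [hasDerivAt_iff_tendsto_slope] at hD
  have hmono : 𝓝[>] (0:ℝ) ≤ 𝓝[≠] (0:ℝ) := nhdsWithin_mono _ fun t ht => ne_of_gt ht
  have hlim := hD.mono_left hmono
  have hbd : ∀ᶠ t in 𝓝[>] (0:ℝ),
      slope (fun t : ℝ => f (x + t • (z - x))) 0 t ≤ f z - f x := by
    filter_upwards [Ioc_mem_nhdsGT_of_mem
      (by constructor <;> norm_num : (0:ℝ) ∈ Set.Ico (0:ℝ) 1)] with t ht
    have hcv := hf.2 (Set.mem_univ x) (Set.mem_univ z)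
      (by linarith [ht.2] : (0:ℝ) ≤ 1 - t) ht.1.le (by ring)
    rw [show (1 - t) • x + t • z = x + t • (z - x) by module] at hcv
    simp only [smul_eq_mul] at hcv
    have hs : slope (fun t : ℝ => f (x + t • (z - x))) 0 t
        = (f (x + t • (z - x)) - f x) / t := by
      rw [slope_def_field]; simp
    rw [hs, div_le_iff₀ ht.1]
    nlinarith [hcv]
  have := le_of_tendsto hlim hbd
  linarith

lemma aux_prox_subgrad {E : Type*} [NormedAddCommGroup E] [InnerProductSpace ℝ E]
    {f : E → ℝ} (hf : ConvexOn ℝ Set.univ f) {c : ℝ} (hc : 0 < c) {u w : E}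
    (hmin : ∀ z, f w + c * ‖w - u‖ ^ 2 ≤ f z + c * ‖z - u‖ ^ 2) (z : E) :
    f w + (inner ℝ ((2 * c) • (u - w)) (z - w) : ℝ) ≤ f z := by
  have hq : ∀ t ∈ Set.Ioc (0:ℝ) 1,
      f w + (inner ℝ ((2 * c) • (u - w)) (z - w) : ℝ) ≤ f z + c * t * ‖z - w‖ ^ 2 := by
    intro t ht
    have H := hmin (w + t • (z - w))
    have hcv := hf.2 (Set.mem_univ w) (Set.mem_univ z)
      (by linarith [ht.2] : (0:ℝ) ≤ 1 - t) ht.1.le (by ring)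
    rw [show (1 - t) • w + t • z = w + t • (z - w) by module] at hcv
    simp only [smul_eq_mul] at hcv
    have hexp : ‖w + t • (z - w) - u‖ ^ 2
        = ‖w - u‖ ^ 2 + 2 * (t * (inner ℝ (w - u) (z - w) : ℝ)) + t ^ 2 * ‖z - w‖ ^ 2 := by
      rw [show w + t • (z - w) - u = (w - u) + t • (z - w) by abel,
        norm_add_sq_real, real_inner_smul_right, norm_smul]
      simp only [Real.norm_eq_abs, mul_pow, sq_abs]
    have hip : (inner ℝ ((2 * c) • (u - w)) (z - w) : ℝ)
        = -(2 * c * (inner ℝ (w - u) (z - w) : ℝ)) := by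
      rw [real_inner_smul_left, show u - w = -(w - u) by abel, inner_neg_left]; ring
    rw [hip]
    rw [hexp] at H
    have ht0 : 0 < t := ht.1
    have step : t * (f w + -(2 * c * (inner ℝ (w - u) (z - w) : ℝ)))
        ≤ t * (f z + c * t * ‖z - w‖ ^ 2) := by nlinarith [H, hcv]
    exact le_of_mul_le_mul_left step ht0
  have hlim : Tendsto (fun t : ℝ => f z + c * t * ‖z - w‖ ^ 2) (𝓝[>] (0:ℝ)) (𝓝 (f z)) := by
    have hcont : Continuous fun t : ℝ => f z + c * t * ‖z - w‖ ^ 2 := by continuity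
    have h0 := (hcont.tendsto 0).mono_left (nhdsWithin_le_nhds (s := Set.Ioi (0:ℝ)))
    simpa using h0
  refine ge_of_tendsto hlim ?_
  filter_upwards [Ioc_mem_nhdsGT_of_mem
    (by constructor <;> norm_num : (0:ℝ) ∈ Set.Ico (0:ℝ) 1)] with t ht using hq t ht

set_option maxHeartbeats 2000000 in
/-- Convex FedAMP with diminishing step sizes: if `Σ α_k = ∞` and `Σ α_k² < ∞`, then
`liminf_{k→∞} 𝒢(W^k) = 𝒢*`, the optimal value of `𝒢 = ℱ + λ𝒜`. -/
theorem stmt_10 (n : ℕ) (F 𝒜 : EuclideanSpace ℝ (Fin n) → ℝ)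
    (hF : ConvexOn ℝ Set.univ F) (h𝒜 : ConvexOn ℝ Set.univ 𝒜)
    (h𝒜d : Differentiable ℝ 𝒜)
    (lam B : ℝ) (hlam : 0 < lam) (hB : 0 < B)
    (α : ℕ → ℝ) (hαpos : ∀ k, 0 < α k)
    (hαdiv : Tendsto (fun N => ∑ k ∈ Finset.range N, α k) atTop atTop)
    (hαsq : Summable fun k => (α k) ^ 2)
    (W : ℕ → EuclideanSpace ℝ (Fin n))
    (Wstar : EuclideanSpace ℝ (Fin n))
    (hWstar : ∀ Z, F Wstar + lam * 𝒜 Wstar ≤ F Z + lam * 𝒜 Z)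
    (hsub : ∀ k, ∀ Y : EuclideanSpace ℝ (Fin n),
      (∀ Z, F (W k) + (inner ℝ Y (Z - W k) : ℝ) ≤ F Z) → ‖Y‖ ≤ B)
    (hgrad : ∀ k, ‖gradient 𝒜 (W k)‖ ≤ B / lam)
    (hiter : ∀ k, 1 ≤ k → ∀ Z,
      F (W k) + (lam / (2 * α k)) *
          ‖W k - (W (k - 1) - α k • gradient 𝒜 (W (k - 1)))‖ ^ 2
        ≤ F Z + (lam / (2 * α k)) *
          ‖Z - (W (k - 1) - α k • gradient 𝒜 (W (k - 1)))‖ ^ 2) :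
    liminf (fun k => F (W k) + lam * 𝒜 (W k)) atTop = F Wstar + lam * 𝒜 Wstar := by
  set Gs : ℝ := F Wstar + lam * 𝒜 Wstar with hGsdef
  set C : ℝ := 12 * (B ^ 2 / lam ^ 2) with hCdef
  have hC0 : 0 ≤ C := by positivity
  clear_value Gs C
  -- key per-step inequality
  have key : ∀ k, 1 ≤ k →
      ‖W k - Wstar‖ ^ 2 + (2 * (α k / lam)) * ((F (W k) + lam * 𝒜 (W k)) - Gs)
        ≤ ‖W (k - 1) - Wstar‖ ^ 2 + C * (α k) ^ 2 := by
    intro k hk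
    set a : ℝ := α k with hadef
    have ha : 0 < a := hαpos k
    set x : EuclideanSpace ℝ (Fin n) := W (k - 1) with hxdef
    set p : EuclideanSpace ℝ (Fin n) := W k with hpdef
    set U : EuclideanSpace ℝ (Fin n) := x - a • gradient 𝒜 x with hUdef
    have hc : 0 < lam / (2 * a) := by positivity
    have hmin : ∀ Z, F p + (lam / (2 * a)) * ‖p - U‖ ^ 2
        ≤ F Z + (lam / (2 * a)) * ‖Z - U‖ ^ 2 := hiter k hk
    set Y : EuclideanSpace ℝ (Fin n) := (2 * (lam / (2 * a))) • (U - p) with hYdef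
    have hYsub : ∀ Z, F p + (inner ℝ Y (Z - p) : ℝ) ≤ F Z := fun Z =>
      aux_prox_subgrad hF hc hmin Z
    have hYB : ‖Y‖ ≤ B := hsub k Y hYsub
    have h2c : 2 * (lam / (2 * a)) = lam / a := by field_simp
    set g : EuclideanSpace ℝ (Fin n) := gradient 𝒜 x + (1 / lam) • Y with hgdef
    have hstep : p = x - a • g := by
      have h1 : a • g = a • gradient 𝒜 x + (a / lam) • Y := by
        rw [hgdef, smul_add, smul_smul]; ring_nf
      have h2 : (a / lam) • Y = U - p := by
        rw [hYdef, h2c, smul_smul]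
        rw [show a / lam * (lam / a) = 1 by field_simp]
        rw [one_smul]
      rw [h1, h2, hUdef]; abel
    have hgB : ‖g‖ ≤ 2 * B / lam := by
      calc ‖g‖ ≤ ‖gradient 𝒜 x‖ + ‖(1 / lam) • Y‖ := norm_add_le _ _
        _ ≤ B / lam + (1 / lam) * B := by
            refine add_le_add (hgrad (k - 1)) ?_
            rw [norm_smul, Real.norm_eq_abs, abs_of_pos (by positivity)]
            exact mul_le_mul_of_nonneg_left hYB (by positivity)
        _ = 2 * B / lam := by field_simp; ring
    have hdist : ‖p - Wstar‖ ^ 2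
        = ‖x - Wstar‖ ^ 2 - 2 * a * (inner ℝ g (x - Wstar) : ℝ) + a ^ 2 * ‖g‖ ^ 2 := by
      rw [hstep, show x - a • g - Wstar = (x - Wstar) - a • g by abel,
        norm_sub_sq_real, real_inner_smul_right, norm_smul]
      rw [real_inner_comm]
      simp only [Real.norm_eq_abs, mul_pow, sq_abs]
      ring
    have hxp : ‖x - p‖ ≤ a * (2 * B / lam) := by
      rw [hstep, show x - (x - a • g) = a • g by abel, norm_smul, Real.norm_eq_abs,
        abs_of_pos ha]
      exact mul_le_mul_of_nonneg_left hgB ha.le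
    -- inequalities
    have hA1 : 𝒜 x + (inner ℝ (gradient 𝒜 x) (Wstar - x) : ℝ) ≤ 𝒜 Wstar :=
      aux_grad_ineq h𝒜 h𝒜d x Wstar
    have hA2 : 𝒜 p + (inner ℝ (gradient 𝒜 p) (x - p) : ℝ) ≤ 𝒜 x :=
      aux_grad_ineq h𝒜 h𝒜d p x
    have hA2' : -(B / lam * (a * (2 * B / lam))) ≤ (inner ℝ (gradient 𝒜 p) (x - p) : ℝ) := by
      have h1 := abs_real_inner_le_norm (gradient 𝒜 p) (x - p)
      have h2 : ‖gradient 𝒜 p‖ * ‖x - p‖ ≤ B / lam * (a * (2 * B / lam)) :=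
        mul_le_mul (hgrad k) hxp (norm_nonneg _) (by positivity)
      have := neg_abs_le (inner ℝ (gradient 𝒜 p) (x - p) : ℝ)
      linarith
    have hF1 : F p - F Wstar ≤ (inner ℝ Y (p - Wstar) : ℝ) := by
      have := hYsub Wstar
      rw [show Wstar - p = -(p - Wstar) by abel, inner_neg_right] at this
      linarith
    have hF2 : -(B * (a * (2 * B / lam))) ≤ (inner ℝ Y (x - p) : ℝ) := by
      have h1 := abs_real_inner_le_norm Y (x - p)
      have h2 : ‖Y‖ * ‖x - p‖ ≤ B * (a * (2 * B / lam)) :=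
        mul_le_mul hYB hxp (norm_nonneg _) hB.le
      have := neg_abs_le (inner ℝ Y (x - p) : ℝ)
      linarith
    have hYsplit : (inner ℝ Y (x - Wstar) : ℝ)
        = (inner ℝ Y (p - Wstar) : ℝ) + (inner ℝ Y (x - p) : ℝ) := by
      rw [← inner_add_right]
      congr 1
      abel
    have hgsplit : (inner ℝ g (x - Wstar) : ℝ)
        = (inner ℝ (gradient 𝒜 x) (x - Wstar) : ℝ) + (1 / lam) * (inner ℝ Y (x - Wstar) : ℝ) := by
      rw [hgdef, inner_add_left, real_inner_smul_left]
    have hA1' : 𝒜 x - 𝒜 Wstar ≤ (inner ℝ (gradient 𝒜 x) (x - Wstar) : ℝ) := by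
      rw [show x - Wstar = -(Wstar - x) by abel, inner_neg_right]
      linarith
    -- abstract inner ℝ products as reals
    set iG : ℝ := (inner ℝ g (x - Wstar) : ℝ) with hiG
    set iAx : ℝ := (inner ℝ (gradient 𝒜 x) (x - Wstar) : ℝ) with hiAx
    set iAp : ℝ := (inner ℝ (gradient 𝒜 p) (x - p) : ℝ) with hiAp
    set iYp : ℝ := (inner ℝ Y (p - Wstar) : ℝ) with hiYp
    set iYx : ℝ := (inner ℝ Y (x - p) : ℝ) with hiYx
    set iY : ℝ := (inner ℝ Y (x - Wstar) : ℝ) with hiY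
    clear_value iG iAx iAp iYp iYx iY
    -- main lower bound: lam * iG ≥ (G k - Gs) - 4 B²/lam * a
    have h5 : (F p + lam * 𝒜 p) - Gs - 4 * (B ^ 2 / lam) * a ≤ lam * iG := by
      have e1 : lam * iG = lam * iAx + (iYp + iYx) := by
        rw [hgsplit, hYsplit]; field_simp; try ring
      have e2 : lam * (𝒜 x - 𝒜 Wstar) ≤ lam * iAx :=
        mul_le_mul_of_nonneg_left hA1' hlam.le
      have e3 : 𝒜 p - (B / lam * (a * (2 * B / lam))) - 𝒜 Wstar ≤ 𝒜 x - 𝒜 Wstar := by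
        linarith
      have e4 : lam * (𝒜 p - (B / lam * (a * (2 * B / lam))) - 𝒜 Wstar)
          ≤ lam * (𝒜 x - 𝒜 Wstar) := mul_le_mul_of_nonneg_left e3 hlam.le
      have e5 : lam * (𝒜 p - (B / lam * (a * (2 * B / lam))) - 𝒜 Wstar)
          = lam * 𝒜 p - 2 * (B ^ 2 / lam) * a - lam * 𝒜 Wstar := by
        field_simp
      have e6 : B * (a * (2 * B / lam)) = 2 * (B ^ 2 / lam) * a := by
        field_simp
      rw [hGsdef]
      linarith [e1, e2, e4, e5, e6, hF1, hF2]
    -- conclude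
    have hg2 : ‖g‖ ^ 2 ≤ (2 * B / lam) ^ 2 :=
      pow_le_pow_left₀ (norm_nonneg _) hgB 2
    have hg2' : a ^ 2 * ‖g‖ ^ 2 ≤ a ^ 2 * (2 * B / lam) ^ 2 :=
      mul_le_mul_of_nonneg_left hg2 (sq_nonneg a)
    have h6 : (2 * (a / lam)) * ((F p + lam * 𝒜 p) - Gs - 4 * (B ^ 2 / lam) * a)
        ≤ (2 * (a / lam)) * (lam * iG) :=
      mul_le_mul_of_nonneg_left h5 (by positivity)
    have e7 : (2 * (a / lam)) * (lam * iG) = 2 * a * iG := by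
      field_simp; try ring
    have e8 : (2 * (a / lam)) * (4 * (B ^ 2 / lam) * a) = 8 * (B ^ 2 / lam ^ 2) * a ^ 2 := by
      field_simp; ring
    have e10 : (2 * (a / lam)) * ((F p + lam * 𝒜 p) - Gs - 4 * (B ^ 2 / lam) * a)
        = (2 * (a / lam)) * ((F p + lam * 𝒜 p) - Gs) - 8 * (B ^ 2 / lam ^ 2) * a ^ 2 := by
      rw [mul_sub, e8]
    have h7 : (2 * (a / lam)) * ((F p + lam * 𝒜 p) - Gs)
        ≤ 2 * a * iG + 8 * (B ^ 2 / lam ^ 2) * a ^ 2 := by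
      rw [e7] at h6; linarith [h6, e10]
    have e9 : a ^ 2 * (2 * B / lam) ^ 2 = 4 * (B ^ 2 / lam ^ 2) * a ^ 2 := by
      field_simp; ring
    rw [hdist, hCdef]
    linarith [h7, hg2', e9]
  -- the liminf argument
  have hlow : ∀ k, Gs ≤ F (W k) + lam * 𝒜 (W k) := fun k => hWstar (W k)
  have hmem : Gs ∈ {x : ℝ | ∀ᶠ k in atTop, x ≤ F (W k) + lam * 𝒜 (W k)} :=
    Eventually.of_forall hlow
  have hub : ∀ b ∈ {x : ℝ | ∀ᶠ k in atTop, x ≤ F (W k) + lam * 𝒜 (W k)}, b ≤ Gs := by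
    intro b hb
    by_contra hcon
    push_neg at hcon
    set ε : ℝ := b - Gs with hεdef
    have hε0 : 0 < ε := by simp only [hεdef]; linarith
    clear_value ε
    obtain ⟨N, hN⟩ := eventually_atTop.1 hb
    set M := max N 1 with hM
    set T : ℝ := ∑' k, (α k) ^ 2 with hT
    have hT0 : 0 ≤ T := tsum_nonneg fun i => sq_nonneg _
    have hTk : ∀ K : ℕ, ∑ k ∈ Finset.Ico (M + 1) (K + 1), (α k) ^ 2 ≤ T := fun K =>
      Summable.sum_le_tsum _ (fun i _ => sq_nonneg _) hαsq
    clear_value T M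
    have claim : ∀ K, M ≤ K →
        ‖W K - Wstar‖ ^ 2 + (2 * (1 / lam)) * ε * (∑ k ∈ Finset.Ico (M + 1) (K + 1), α k)
          ≤ ‖W M - Wstar‖ ^ 2 + C * ∑ k ∈ Finset.Ico (M + 1) (K + 1), (α k) ^ 2 := by
      intro K hK
      induction K, hK using Nat.le_induction with
      | base => simp
      | succ K hK ih =>
        have hkey := key (K + 1) (by omega)
        simp only [Nat.add_sub_cancel] at hkey
        have hGK : b ≤ F (W (K + 1)) + lam * 𝒜 (W (K + 1)) := hN _ (by omega)
        have hα0 : 0 ≤ 2 * (α (K + 1) / lam) :=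
          mul_nonneg (by norm_num) (div_nonneg (hαpos (K + 1)).le hlam.le)
        have hmul : (2 * (α (K + 1) / lam)) * ε
            ≤ (2 * (α (K + 1) / lam)) * ((F (W (K + 1)) + lam * 𝒜 (W (K + 1))) - Gs) :=
          mul_le_mul_of_nonneg_left (by linarith [hGK, hεdef.le, hεdef.ge]) hα0
        rw [Finset.sum_Ico_succ_top (show M + 1 ≤ K + 1 by omega),
          Finset.sum_Ico_succ_top (show M + 1 ≤ K + 1 by omega)]
        have heq : (2 * (1 / lam)) * ε * α (K + 1) = (2 * (α (K + 1) / lam)) * ε := by ring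
        linarith [ih, hkey, hmul, heq]
    have hbound : ∀ K, M ≤ K →
        (2 * (1 / lam)) * ε * (∑ k ∈ Finset.Ico (M + 1) (K + 1), α k)
          ≤ ‖W M - Wstar‖ ^ 2 + C * T := by
      intro K hK
      have h1 := claim K hK
      have h2 : C * ∑ k ∈ Finset.Ico (M + 1) (K + 1), (α k) ^ 2 ≤ C * T :=
        mul_le_mul_of_nonneg_left (hTk K) hC0
      have h3 : (0:ℝ) ≤ ‖W K - Wstar‖ ^ 2 := by positivity
      linarith
    have hdiv2 : Tendsto (fun K => ∑ k ∈ Finset.Ico (M + 1) (K + 1), α k) atTop atTop := by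
      have h1 : Tendsto (fun K : ℕ =>
          (∑ k ∈ Finset.range (K + 1), α k) - ∑ k ∈ Finset.range (M + 1), α k) atTop atTop := by
        simpa [sub_eq_add_neg] using tendsto_atTop_add_const_right atTop
          (-(∑ k ∈ Finset.range (M + 1), α k)) (hαdiv.comp (tendsto_add_atTop_nat 1))
      apply h1.congr'
      filter_upwards [eventually_ge_atTop M] with K hK
      exact (Finset.sum_Ico_eq_sub α (by omega)).symm
    obtain ⟨K, hKM, hKb⟩ : ∃ K, M ≤ K ∧
        (‖W M - Wstar‖ ^ 2 + C * T) * (lam / (2 * ε))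
          < ∑ k ∈ Finset.Ico (M + 1) (K + 1), α k := by
      obtain ⟨K, h1, h2⟩ := ((hdiv2.eventually_gt_atTop
        ((‖W M - Wstar‖ ^ 2 + C * T) * (lam / (2 * ε)))).and (eventually_ge_atTop M)).exists
      exact ⟨K, h2, h1⟩
    have h1 := hbound K hKM
    have hpos : 0 < (2 * (1 / lam)) * ε := mul_pos (by positivity) hε0
    have h2 : (2 * (1 / lam)) * ε * ((‖W M - Wstar‖ ^ 2 + C * T) * (lam / (2 * ε)))
        < (2 * (1 / lam)) * ε * (∑ k ∈ Finset.Ico (M + 1) (K + 1), α k) :=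
      mul_lt_mul_of_pos_left hKb hpos
    have h3 : (2 * (1 / lam)) * ε * ((‖W M - Wstar‖ ^ 2 + C * T) * (lam / (2 * ε)))
        = ‖W M - Wstar‖ ^ 2 + C * T := by
      field_simp
    linarith
  rw [liminf_eq]
  exact le_antisymm (csSup_le ⟨Gs, hmem⟩ hub) (le_csSup ⟨Gs, fun x hx => hub x hx⟩ hmem)
end

section
/- Let 𝒢 = ℱ + λ𝒜 with ℱ, 𝒜 continuously differentiable and ∇ℱ, ∇𝒜 Lipschitz with modulus L, and suppose ‖∇ℱ(W^k)‖ ≤ B, ‖∇𝒜(W^k)‖ ≤ B/λ for all k. With constant step sizes α_k = λ/√K, the FedAMP iterates satisfy min_{0≤k≤K} ‖∇𝒢(W^k)‖² ≤ 18(𝒢(W^0) - 𝒢* + 20LB²)/√K + O(1/K), where 𝒢* is the optimal value of 𝒢. -/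
open Set

open Set InnerProductSpace

local notation "⟪" x ", " y "⟫" => @inner ℝ _ _ x y

variable {E : Type*} [NormedAddCommGroup E] [InnerProductSpace ℝ E] [CompleteSpace E]

lemma grad_sum (F 𝒜 : E → ℝ) (lam : ℝ) (x : E)
    (hF : DifferentiableAt ℝ F x) (h𝒜 : DifferentiableAt ℝ 𝒜 x) :
    HasGradientAt (fun Z => F Z + lam * 𝒜 Z) (gradient F x + lam • gradient 𝒜 x) x := by
  have h1 : HasFDerivAt F (toDual ℝ E (gradient F x)) x := hF.hasGradientAt.hasFDerivAt
  have h2 : HasFDerivAt 𝒜 (toDual ℝ E (gradient 𝒜 x)) x := h𝒜.hasGradientAt.hasFDerivAt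
  have h3 := h1.add (h2.const_mul lam)
  rw [hasGradientAt_iff_hasFDerivAt, map_add, map_smul]
  exact h3

lemma grad_quad (c : ℝ) (U x : E) :
    HasGradientAt (fun Z => c * ‖Z - U‖ ^ 2) ((2 * c) • (x - U)) x := by
  have hid : HasFDerivAt (fun Z : E => Z - U) (ContinuousLinearMap.id ℝ E) x :=
    (hasFDerivAt_id x).sub_const U
  have h := (hid.inner ℝ hid).const_mul c
  have heq : (fun Z : E => c * ⟪Z - U, Z - U⟫) = fun Z : E => c * ‖Z - U‖ ^ 2 := by
    funext Z; rw [real_inner_self_eq_norm_sq]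
  rw [heq] at h
  rw [hasGradientAt_iff_hasFDerivAt]
  convert h using 1
  · rfl
  ext y
  simp only [toDual_apply_apply, ContinuousLinearMap.smul_apply, ContinuousLinearMap.coe_comp',
    Function.comp_apply, ContinuousLinearMap.prod_apply, ContinuousLinearMap.coe_id', id_eq,
    fderivInnerCLM_apply, smul_eq_mul]
  rw [real_inner_smul_left, real_inner_comm y (x - U)]
  ring

lemma descent_lemma (f : E → ℝ) (hf : ContDiff ℝ 1 f) (L : ℝ) (hL : 0 ≤ L)
    (hLip : LipschitzWith (Real.toNNReal L) (fun x => gradient f x)) (x y : E) :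
    f y ≤ f x + ⟪gradient f x, y - x⟫ + L / 2 * ‖y - x‖ ^ 2 := by
  set d := y - x with hd
  have hdiff : ∀ z : E, HasFDerivAt f (toDual ℝ E (gradient f z)) z := fun z =>
    ((hf.differentiable one_ne_zero) z).hasGradientAt.hasFDerivAt
  set φ : ℝ → ℝ := fun t => f (x + t • d) - t * ⟪gradient f x, d⟫ - L / 2 * t ^ 2 * ‖d‖ ^ 2
    with hφ
  have hφ' : ∀ t : ℝ, HasDerivAt φ
      (⟪gradient f (x + t • d), d⟫ - ⟪gradient f x, d⟫ - L / 2 * (2 * t) * ‖d‖ ^ 2) t := by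
    intro t
    have h1 : HasDerivAt (fun t : ℝ => x + t • d) d t := by
      simpa using ((hasDerivAt_id t).smul_const d).const_add x
    have h2 : HasDerivAt (fun t : ℝ => f (x + t • d)) (⟪gradient f (x + t • d), d⟫) t := by
      have := (hdiff (x + t • d)).comp_hasDerivAt t h1
      rw [toDual_apply_apply] at this
      exact this
    have h3 : HasDerivAt (fun t : ℝ => t * ⟪gradient f x, d⟫) (⟪gradient f x, d⟫) t := by
      simpa using (hasDerivAt_id t).mul_const (⟪gradient f x, d⟫)
    have h4 : HasDerivAt (fun t : ℝ => L / 2 * t ^ 2 * ‖d‖ ^ 2)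
        (L / 2 * (2 * t) * ‖d‖ ^ 2) t := by
      have := ((hasDerivAt_pow 2 t).const_mul (L / 2)).mul_const (‖d‖ ^ 2)
      simpa [mul_comm, mul_assoc] using this
    exact (h2.sub h3).sub h4
  have hmono : AntitoneOn φ (Icc 0 1) := by
    apply antitoneOn_of_deriv_nonpos (convex_Icc 0 1)
    · exact fun t _ => ((hφ' t).continuousAt).continuousWithinAt
    · exact fun t _ => ((hφ' t).differentiableAt).differentiableWithinAt
    · intro t ht
      rw [interior_Icc] at ht
      rw [(hφ' t).deriv]
      have key : ⟪gradient f (x + t • d) - gradient f x, d⟫ ≤ L * t * ‖d‖ ^ 2 := by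
        calc ⟪gradient f (x + t • d) - gradient f x, d⟫
            ≤ ‖gradient f (x + t • d) - gradient f x‖ * ‖d‖ := real_inner_le_norm _ _
          _ ≤ (L * (t * ‖d‖)) * ‖d‖ := by
              apply mul_le_mul_of_nonneg_right _ (norm_nonneg d)
              have := hLip.dist_le_mul (x + t • d) x
              calc ‖gradient f (x + t • d) - gradient f x‖ ≤ (L.toNNReal : ℝ) * ‖t • d‖ := by
                    simpa [dist_eq_norm] using this
                _ = L * (t * ‖d‖) := by
                    rw [norm_smul, Real.norm_eq_abs, abs_of_nonneg ht.1.le,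
                      Real.coe_toNNReal _ hL]
          _ = L * t * ‖d‖ ^ 2 := by ring
      have : ⟪gradient f (x + t • d), d⟫ - ⟪gradient f x, d⟫ =
          ⟪gradient f (x + t • d) - gradient f x, d⟫ := by rw [inner_sub_left]
      rw [this]
      nlinarith [key]
  have h01 := hmono (left_mem_Icc.2 zero_le_one) (right_mem_Icc.2 zero_le_one) zero_le_one
  have hxy : x + (1:ℝ) • d = y := by rw [hd]; simp
  have e0 : φ 0 = f x := by simp [hφ]
  have e1 : φ 1 = f y - ⟪gradient f x, d⟫ - L / 2 * ‖d‖ ^ 2 := by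
    simp only [hφ, one_smul, one_pow, mul_one, one_mul]
    rw [hd, add_sub_cancel]
  rw [e0, e1] at h01
  linarith

set_option maxHeartbeats 2000000 in
/-- Non-convex convergence of FedAMP: with `𝒢 = ℱ + λ𝒜` smooth (`∇ℱ, ∇𝒜` Lipschitz with
modulus `L`), gradient bounds `‖∇ℱ(W^k)‖ ≤ B`, `‖∇𝒜(W^k)‖ ≤ B/λ`, and constant step
sizes `α_k = λ/√K`, the iterates satisfy
`min_{0≤k≤K} ‖∇𝒢(W^k)‖² ≤ 18(𝒢(W⁰) - 𝒢* + 20LB²)/√K + O(1/K)`. -/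
theorem stmt_11 (n : ℕ) (F 𝒜 : EuclideanSpace ℝ (Fin n) → ℝ)
    (hF : ContDiff ℝ 1 F) (h𝒜 : ContDiff ℝ 1 𝒜)
    (L : ℝ) (hL : 0 < L)
    (hFL : LipschitzWith (Real.toNNReal L) (fun x => gradient F x))
    (h𝒜L : LipschitzWith (Real.toNNReal L) (fun x => gradient 𝒜 x))
    (lam B Gstar : ℝ) (hlam : 0 < lam) (hB : 0 < B)
    (hGstar : ∀ Z, Gstar ≤ F Z + lam * 𝒜 Z) :
    ∃ C : ℝ, ∀ K : ℕ, 1 ≤ K → ∀ W : ℕ → EuclideanSpace ℝ (Fin n),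
      (∀ k ≤ K, ‖gradient F (W k)‖ ≤ B) →
      (∀ k ≤ K, ‖gradient 𝒜 (W k)‖ ≤ B / lam) →
      (∀ k, 1 ≤ k → k ≤ K → ∀ Z,
        F (W k) + (lam / (2 * (lam / Real.sqrt K))) *
            ‖W k - (W (k - 1) - (lam / Real.sqrt K) • gradient 𝒜 (W (k - 1)))‖ ^ 2
          ≤ F Z + (lam / (2 * (lam / Real.sqrt K))) *
            ‖Z - (W (k - 1) - (lam / Real.sqrt K) • gradient 𝒜 (W (k - 1)))‖ ^ 2) →
      ∃ k ≤ K, ‖gradient (fun Z => F Z + lam * 𝒜 Z) (W k)‖ ^ 2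
        ≤ 18 * (F (W 0) + lam * 𝒜 (W 0) - Gstar + 20 * L * B ^ 2) / Real.sqrt K
          + C / K := by
  have dF : Differentiable ℝ F := hF.differentiable one_ne_zero
  have d𝒜 : Differentiable ℝ 𝒜 := h𝒜.differentiable one_ne_zero
  refine ⟨16 * B ^ 2 * lam ^ 2 * L ^ 2, ?_⟩
  intro K hK W hgF hg𝒜 hmin
  set s := Real.sqrt (K : ℝ) with hs_def
  have hKpos : (0 : ℝ) < K := by exact_mod_cast hK
  have hs : 0 < s := Real.sqrt_pos.2 hKpos
  have hs2 : s ^ 2 = K := Real.sq_sqrt hKpos.le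
  have hc : lam / (2 * (lam / s)) = s / 2 := by
    field_simp
  simp only [hc] at hmin
  set α := lam / s with hα
  have hαpos : 0 < α := div_pos hlam hs
  have hsa : s * α = lam := by rw [hα]; field_simp
  have hD0 : 0 ≤ F (W 0) + lam * 𝒜 (W 0) - Gstar := by linarith [hGstar (W 0)]
  set D := F (W 0) + lam * 𝒜 (W 0) - Gstar with hD_def
  -- gradient of the sum at any point
  have hgradsum : ∀ x, gradient (fun Z => F Z + lam * 𝒜 Z) x
      = gradient F x + lam • gradient 𝒜 x := fun x =>
    (grad_sum F 𝒜 lam x (dF x) (d𝒜 x)).gradient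
  by_cases hcase : 2 * lam * L ≤ s
  · -- main case
    -- first-order optimality
    have hfo : ∀ k, 1 ≤ k → k ≤ K →
        gradient F (W k) = (-s) • (W k - (W (k - 1) - α • gradient 𝒜 (W (k - 1)))) := by
      intro k h1 h2
      set U := W (k - 1) - α • gradient 𝒜 (W (k - 1)) with hU
      have hloc : IsLocalMin (fun Z => F Z + s / 2 * ‖Z - U‖ ^ 2) (W k) :=
        Filter.Eventually.of_forall (fun Z => hmin k h1 h2 Z)
      have hgrad : HasGradientAt (fun Z => F Z + s / 2 * ‖Z - U‖ ^ 2)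
          (gradient F (W k) + s • (W k - U)) (W k) := by
        have h1' : HasFDerivAt F (InnerProductSpace.toDual ℝ _ (gradient F (W k))) (W k) :=
          (dF (W k)).hasGradientAt.hasFDerivAt
        have h2' := (grad_quad (s / 2) U (W k)).hasFDerivAt
        have h3' := h1'.add h2'
        rw [hasGradientAt_iff_hasFDerivAt, map_add]
        have : (2 * (s / 2)) • (W k - U) = s • (W k - U) := by
          rw [mul_div_cancel₀]; norm_num
        rw [← this]
        exact h3'
      have h0 := hloc.hasFDerivAt_eq_zero hgrad.hasFDerivAt
      have hz : gradient F (W k) + s • (W k - U) = 0 := by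
        apply (InnerProductSpace.toDual ℝ _).injective
        rw [h0, map_zero]
      have := eq_neg_of_add_eq_zero_left hz
      rw [this, neg_smul]
    -- one-step decrease
    have hdec : ∀ k, 1 ≤ k → k ≤ K →
        F (W k) + lam * 𝒜 (W k) ≤ F (W (k - 1)) + lam * 𝒜 (W (k - 1))
          - s / 4 * ‖W k - W (k - 1)‖ ^ 2 := by
      intro k h1 h2
      set U := W (k - 1) - α • gradient 𝒜 (W (k - 1)) with hU
      set aa := gradient 𝒜 (W (k - 1)) with haa
      set v := W k - U with hv
      have hvΔ : W k - W (k - 1) = v - α • aa := by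
        rw [hv, hU]; abel
      have hF1 : F (W k) + s / 2 * ‖v‖ ^ 2 ≤ F (W (k - 1)) + s / 2 * ‖α • aa‖ ^ 2 := by
        have := hmin k h1 h2 (W (k - 1))
        rw [show W (k - 1) - U = α • aa by rw [hU]; abel] at this
        exact this
      have hA1 : 𝒜 (W k) ≤ 𝒜 (W (k - 1)) + ⟪aa, W k - W (k - 1)⟫
          + L / 2 * ‖W k - W (k - 1)‖ ^ 2 :=
        descent_lemma 𝒜 h𝒜 L hL.le h𝒜L (W (k - 1)) (W k)
      have hsm : ‖α • aa‖ ^ 2 = α ^ 2 * ‖aa‖ ^ 2 := by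
        rw [norm_smul, Real.norm_eq_abs, abs_of_pos hαpos, mul_pow]
      have hnΔ : ‖W k - W (k - 1)‖ ^ 2
          = ‖v‖ ^ 2 - 2 * (α * ⟪aa, v⟫) + α ^ 2 * ‖aa‖ ^ 2 := by
        rw [hvΔ, norm_sub_sq_real, real_inner_smul_right, hsm, real_inner_comm]
      have hip : ⟪aa, W k - W (k - 1)⟫ = ⟪aa, v⟫ - α * ‖aa‖ ^ 2 := by
        rw [hvΔ, inner_sub_right, real_inner_smul_right, real_inner_self_eq_norm_sq]
      rw [hip] at hA1
      have hA1' := mul_le_mul_of_nonneg_left hA1 hlam.le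
      have heq : s / 2 * (α ^ 2 * ‖aa‖ ^ 2) + lam * (⟪aa, v⟫ - α * ‖aa‖ ^ 2)
          + lam * (L / 2 * ‖W k - W (k - 1)‖ ^ 2)
          = s / 2 * ‖v‖ ^ 2 - (s - lam * L) / 2 * ‖W k - W (k - 1)‖ ^ 2 := by
        rw [hnΔ, hα]
        field_simp
        ring
      have hcomb : F (W k) + lam * 𝒜 (W k) ≤ F (W (k - 1)) + lam * 𝒜 (W (k - 1))
          - (s - lam * L) / 2 * ‖W k - W (k - 1)‖ ^ 2 := by
        rw [hsm] at hF1
        nlinarith [hF1, hA1', heq]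
      have hq : 0 ≤ (s - 2 * lam * L) * ‖W k - W (k - 1)‖ ^ 2 :=
        mul_nonneg (by linarith) (sq_nonneg _)
      nlinarith [hcomb, hq]
    -- telescoping
    have htel : ∀ m, m ≤ K →
        F (W m) + lam * 𝒜 (W m)
          + s / 4 * ∑ k ∈ Finset.Icc 1 m, ‖W k - W (k - 1)‖ ^ 2
        ≤ F (W 0) + lam * 𝒜 (W 0) := by
      intro m
      induction m with
      | zero => intro _; simp
      | succ p ih =>
        intro hm
        have hp := ih (Nat.le_of_succ_le hm)
        have hd := hdec (p + 1) (Nat.succ_le_succ (Nat.zero_le p)) hm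
        rw [Finset.sum_Icc_succ_top (by omega : 1 ≤ p + 1)]
        simp only [Nat.add_sub_cancel] at hd ⊢
        nlinarith [hd, hp, hs]
    have hsum : s / 4 * ∑ k ∈ Finset.Icc 1 K, ‖W k - W (k - 1)‖ ^ 2 ≤ D := by
      have := htel K le_rfl
      have := hGstar (W K)
      rw [hD_def]; linarith
    -- existence of a good index
    obtain ⟨k0, hk0mem, hk0⟩ :
        ∃ k0 ∈ Finset.Icc 1 K, ‖W k0 - W (k0 - 1)‖ ^ 2 ≤ 4 * D / (s * K) := by
      by_contra h
      push_neg at h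
      have hne : (Finset.Icc 1 K).Nonempty := ⟨1, by simp [hK]⟩
      have hlt : ∑ k ∈ Finset.Icc 1 K, (4 * D / (s * K))
          < ∑ k ∈ Finset.Icc 1 K, ‖W k - W (k - 1)‖ ^ 2 :=
        Finset.sum_lt_sum_of_nonempty hne h
      rw [Finset.sum_const, Nat.card_Icc, Nat.add_sub_cancel, nsmul_eq_mul] at hlt
      have hKne : (K : ℝ) ≠ 0 := ne_of_gt hKpos
      have hconst : (K : ℝ) * (4 * D / (s * K)) = 4 * D / s := by
        field_simp
      rw [hconst] at hlt
      have h4 : s / 4 * (4 * D / s) = D := by field_simp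
      have h5 := mul_lt_mul_of_pos_left hlt (show (0:ℝ) < s / 4 by positivity)
      linarith [hsum, h5, h4.le, h4.ge]
    rw [Finset.mem_Icc] at hk0mem
    obtain ⟨hk1, hk2⟩ := hk0mem
    refine ⟨k0, hk2, ?_⟩
    -- gradient bound at k0
    have hrw : gradient (fun Z => F Z + lam * 𝒜 Z) (W k0)
        = (-s) • (W k0 - W (k0 - 1))
          + lam • (gradient 𝒜 (W k0) - gradient 𝒜 (W (k0 - 1))) := by
      rw [hgradsum, hfo k0 hk1 hk2, ← hsa]
      module
    have hlipA : ‖gradient 𝒜 (W k0) - gradient 𝒜 (W (k0 - 1))‖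
        ≤ L * ‖W k0 - W (k0 - 1)‖ := by
      have := h𝒜L.dist_le_mul (W k0) (W (k0 - 1))
      simpa [dist_eq_norm, Real.coe_toNNReal _ hL.le] using this
    have hnorm : ‖gradient (fun Z => F Z + lam * 𝒜 Z) (W k0)‖
        ≤ (s + lam * L) * ‖W k0 - W (k0 - 1)‖ := by
      rw [hrw]
      calc ‖(-s) • (W k0 - W (k0 - 1))
            + lam • (gradient 𝒜 (W k0) - gradient 𝒜 (W (k0 - 1)))‖
          ≤ ‖(-s) • (W k0 - W (k0 - 1))‖
            + ‖lam • (gradient 𝒜 (W k0) - gradient 𝒜 (W (k0 - 1)))‖ := norm_add_le _ _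
        _ ≤ s * ‖W k0 - W (k0 - 1)‖ + lam * (L * ‖W k0 - W (k0 - 1)‖) := by
            rw [norm_smul, norm_smul, Real.norm_eq_abs, Real.norm_eq_abs,
              abs_of_pos hlam, abs_neg, abs_of_pos hs]
            exact add_le_add le_rfl (mul_le_mul_of_nonneg_left hlipA hlam.le)
        _ = (s + lam * L) * ‖W k0 - W (k0 - 1)‖ := by ring
    have hsq : ‖gradient (fun Z => F Z + lam * 𝒜 Z) (W k0)‖ ^ 2
        ≤ (s + lam * L) ^ 2 * ‖W k0 - W (k0 - 1)‖ ^ 2 := by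
      have h1 := pow_le_pow_left₀ (norm_nonneg _) hnorm 2
      rw [mul_pow] at h1
      exact h1
    have hcoef : (s + lam * L) ^ 2 ≤ 9 / 4 * s ^ 2 := by
      nlinarith [mul_nonneg (by linarith : (0:ℝ) ≤ s - 2 * lam * L) hs.le,
        mul_nonneg (by linarith : (0:ℝ) ≤ s - 2 * lam * L)
          (by nlinarith [mul_pos hlam hL, hs] : (0:ℝ) ≤ s + 2 * lam * L)]
    have hmain : ‖gradient (fun Z => F Z + lam * 𝒜 Z) (W k0)‖ ^ 2 ≤ 9 * D / s := by
      have h2 : (s + lam * L) ^ 2 * ‖W k0 - W (k0 - 1)‖ ^ 2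
          ≤ 9 / 4 * s ^ 2 * (4 * D / (s * K)) := by
        have hb1 : (s + lam * L) ^ 2 * ‖W k0 - W (k0 - 1)‖ ^ 2
            ≤ 9 / 4 * s ^ 2 * ‖W k0 - W (k0 - 1)‖ ^ 2 :=
          mul_le_mul_of_nonneg_right hcoef (sq_nonneg _)
        have hb2 : 9 / 4 * s ^ 2 * ‖W k0 - W (k0 - 1)‖ ^ 2
            ≤ 9 / 4 * s ^ 2 * (4 * D / (s * K)) :=
          mul_le_mul_of_nonneg_left hk0 (by positivity)
        linarith
      have heq2 : 9 / 4 * s ^ 2 * (4 * D / (s * K)) = 9 * D / s := by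
        rw [← hs2]
        field_simp
      linarith [hsq, h2, heq2.le, heq2.ge]
    have hfin : 9 * D / s ≤ 18 * (D + 20 * L * B ^ 2) / s
        + 16 * B ^ 2 * lam ^ 2 * L ^ 2 / K := by
      have h1 : 9 * D / s ≤ 18 * (D + 20 * L * B ^ 2) / s := by
        gcongr
        · norm_num
        · nlinarith [hL, hB, hD0]
      have h2 : (0 : ℝ) ≤ 16 * B ^ 2 * lam ^ 2 * L ^ 2 / K := by positivity
      linarith
    rw [hD_def] at hmain hfin
    calc ‖gradient (fun Z => F Z + lam * 𝒜 Z) (W k0)‖ ^ 2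
        ≤ 9 * (F (W 0) + lam * 𝒜 (W 0) - Gstar) / s := hmain
      _ ≤ _ := hfin
  · -- small K case : take k = 0
    push_neg at hcase
    refine ⟨0, Nat.zero_le K, ?_⟩
    have hg0 : ‖gradient (fun Z => F Z + lam * 𝒜 Z) (W 0)‖ ≤ 2 * B := by
      rw [hgradsum]
      calc ‖gradient F (W 0) + lam • gradient 𝒜 (W 0)‖
          ≤ ‖gradient F (W 0)‖ + ‖lam • gradient 𝒜 (W 0)‖ := norm_add_le _ _
        _ ≤ B + lam * (B / lam) := by
            rw [norm_smul, Real.norm_eq_abs, abs_of_pos hlam]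
            exact add_le_add (hgF 0 (Nat.zero_le K))
              (mul_le_mul_of_nonneg_left (hg𝒜 0 (Nat.zero_le K)) hlam.le)
        _ = 2 * B := by field_simp; ring
    have hsq0 : ‖gradient (fun Z => F Z + lam * 𝒜 Z) (W 0)‖ ^ 2 ≤ 4 * B ^ 2 := by
      have := pow_le_pow_left₀ (norm_nonneg _) hg0 2
      nlinarith [this]
    have hKlt : (K : ℝ) < 4 * lam ^ 2 * L ^ 2 := by nlinarith [hs2, hcase, hs.le]
    have hC : 4 * B ^ 2 ≤ 16 * B ^ 2 * lam ^ 2 * L ^ 2 / K := by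
      rw [le_div_iff₀ hKpos]
      nlinarith [hKlt, hB, sq_nonneg B]
    have hpos : 0 ≤ 18 * (F (W 0) + lam * 𝒜 (W 0) - Gstar + 20 * L * B ^ 2) / s := by
      apply div_nonneg ?_ hs.le
      nlinarith [hD0, hL, hB]
    linarith
end
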